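/- Let 0 < v < 1, a = 2(1+v)/(1-v), and suppose d > (a^k - a^{k-1} - v a^k - v a^{k-1} + 2v)/(a-1) for some k ≥ 1. Then (2·(a^k - 1)/(a-1) + 2a^k)/d + 1 ≤ 2a^2/(a - 1 - av - v) + 1. -/

import Mathlib

theorem stmt_13 (v d : ℝ) (k : ℕ) (hv0 : 0 < v) (hv1 : v < 1) (hk : 1 ≤ k)
    (a : ℝ) (ha : a = 2 * (1 + v) / (1 - v))
    (hd : d > (a ^ k - a ^ (k - 1) - v * a ^ k - v * a ^ (k - 1) + 2 * v) / (a - 1)) :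
    (2 * (a ^ k - 1) / (a - 1) + 2 * a ^ k) / d + 1 ≤ 2 * a ^ 2 / (a - 1 - a * v - v) + 1 := by
  obtain ⟨m, rfl⟩ : ∃ m, k = m + 1 := ⟨k - 1, (Nat.succ_pred_eq_of_pos hk).symm⟩
  have h1v : (0:ℝ) < 1 - v := by linarith
  have haeq : a * (1 - v) = 2 * (1 + v) := by
    rw [ha]; field_simp
  have ha1 : 0 < a - 1 := by nlinarith
  have ha0 : 0 < a := by linarith
  have hkey : a - 1 - a * v - v = 1 + v := by nlinarith
  have hpm : (0:ℝ) < a ^ m := pow_pos ha0 m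
  simp only [Nat.add_sub_cancel] at hd
  have hd' : (a ^ m * (1 + v) + 2 * v) < d * (a - 1) := by
    have := (div_lt_iff₀ ha1).mp hd
    nlinarith [this, pow_succ a m]
  have hd0 : 0 < d := by nlinarith
  have hN : 2 * (a ^ (m+1) - 1) / (a - 1) + 2 * a ^ (m+1)
      = (2 * a ^ (m+2) - 2) / (a - 1) := by
    field_simp; ring
  rw [hkey, hN, div_div]
  apply add_le_add_left
  rw [div_le_div_iff₀ (by positivity) (by linarith)]
  have hp2 : a ^ (m+2) = a ^ m * a ^ 2 := by ring
  nlinarith [mul_lt_mul_of_pos_left hd' (by positivity : (0:ℝ) < 2 * a ^ 2), sq_nonneg a]
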